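/- Let m > n ≥ 1 be integers, ε = (ε_1, …, ε_n) ∈ {±1}^n, and let A be an m×n real SSR(ε) matrix. Fix any η ∈ {±1}, and define ε′ = (ε_1, …, ε_n, η) ∈ {±1}^{n+1}. Then there exists a column vector c ∈ ℝ^m such that the m×(n+1) matrix [A | c], obtained by adjoining c as a new last column to the right border of A, is SSR(ε′). -/

import Mathlib

open Filter Topology Finset

lemma helper_small {ι : Type*} [DecidableEq ι] (s : Finset ι) (b : ι → ℝ) (e : ι → ℕ) (i₀ : ι)
    (hi₀ : i₀ ∈ s) (hb : 0 < b i₀)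
    (h : ∀ i ∈ s, i ≠ i₀ → b i = 0 ∨ e i₀ < e i) :
    ∀ᶠ t in 𝓝[>] (0:ℝ), 0 < ∑ i ∈ s, b i * t ^ e i := by
  classical
  set s' : Finset ι := s.filter (fun i => i = i₀ ∨ e i₀ < e i) with hs'
  have hsum : ∀ t : ℝ, ∑ i ∈ s, b i * t ^ e i = ∑ i ∈ s', b i * t ^ e i := by
    intro t
    refine (Finset.sum_subset (Finset.filter_subset _ _) ?_).symm
    intro i hi hi'
    rcases eq_or_ne i i₀ with rfl | hne
    · exact absurd (Finset.mem_filter.2 ⟨hi, Or.inl rfl⟩) hi'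
    rcases h i hi hne with h0 | hlt
    · simp [h0]
    · exact absurd (Finset.mem_filter.2 ⟨hi, Or.inr hlt⟩) hi'
  have hi₀' : i₀ ∈ s' := Finset.mem_filter.2 ⟨hi₀, Or.inl rfl⟩
  set g : ℝ → ℝ := fun t => b i₀ + ∑ i ∈ s'.erase i₀, b i * t ^ (e i - e i₀) with hg
  have hfac : ∀ t : ℝ, ∑ i ∈ s', b i * t ^ e i = t ^ e i₀ * g t := by
    intro t
    rw [← Finset.add_sum_erase _ _ hi₀', hg, mul_add, Finset.mul_sum]
    congr 1
    · ring
    refine Finset.sum_congr rfl fun i hi => ?_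
    have hmem := Finset.mem_of_mem_erase hi
    have hne := Finset.ne_of_mem_erase hi
    have hlt : e i₀ < e i := (Finset.mem_filter.1 hmem).2.resolve_left hne
    rw [← mul_assoc, mul_comm (t ^ e i₀) (b i), mul_assoc, ← pow_add]
    congr 2
    omega
  have hgc : Continuous g := by
    apply Continuous.add continuous_const
    exact continuous_finset_sum _ fun i _ => Continuous.mul continuous_const (continuous_pow _)
  have hg0 : g 0 = b i₀ := by
    rw [hg]
    simp only
    have : ∑ i ∈ s'.erase i₀, b i * (0:ℝ) ^ (e i - e i₀) = 0 := by
      refine Finset.sum_eq_zero fun i hi => ?_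
      have hlt : e i₀ < e i :=
        (Finset.mem_filter.1 (Finset.mem_of_mem_erase hi)).2.resolve_left
          (Finset.ne_of_mem_erase hi)
      rw [zero_pow (by omega)]
      ring
    rw [this, add_zero]
  have hev : ∀ᶠ t in 𝓝 (0:ℝ), 0 < g t := by
    have htend : Tendsto g (𝓝 0) (𝓝 (g 0)) := hgc.continuousAt
    have := htend.eventually (eventually_gt_nhds (by rw [hg0]; exact hb))
    simpa using this
  have hev' : ∀ᶠ t in 𝓝[>] (0:ℝ), 0 < g t := nhdsWithin_le_nhds hev
  filter_upwards [hev', self_mem_nhdsWithin] with t hgt (htpos : (0:ℝ) < t)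
  rw [hsum, hfac]
  exact mul_pos (pow_pos htpos _) hgt

lemma helper_top {ι : Type*} [DecidableEq ι] (s : Finset ι) (b : ι → ℝ) (e : ι → ℕ) (i₀ : ι)
    (hi₀ : i₀ ∈ s) (hb : 0 < b i₀)
    (h : ∀ i ∈ s, i ≠ i₀ → b i = 0 ∨ e i < e i₀) :
    ∀ᶠ T in atTop, 0 < ∑ i ∈ s, b i * T ^ e i := by
  classical
  set s' : Finset ι := s.filter (fun i => i = i₀ ∨ e i < e i₀) with hs'
  have hsum : ∀ T : ℝ, ∑ i ∈ s, b i * T ^ e i = ∑ i ∈ s', b i * T ^ e i := by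
    intro T
    refine (Finset.sum_subset (Finset.filter_subset _ _) ?_).symm
    intro i hi hi'
    rcases eq_or_ne i i₀ with rfl | hne
    · exact absurd (Finset.mem_filter.2 ⟨hi, Or.inl rfl⟩) hi'
    rcases h i hi hne with h0 | hlt
    · simp [h0]
    · exact absurd (Finset.mem_filter.2 ⟨hi, Or.inr hlt⟩) hi'
  have hi₀' : i₀ ∈ s' := Finset.mem_filter.2 ⟨hi₀, Or.inl rfl⟩
  set g : ℝ → ℝ := fun T => b i₀ + ∑ i ∈ s'.erase i₀, b i * T⁻¹ ^ (e i₀ - e i) with hg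
  have hfac : ∀ T : ℝ, T ≠ 0 → ∑ i ∈ s', b i * T ^ e i = T ^ e i₀ * g T := by
    intro T hT
    rw [← Finset.add_sum_erase _ _ hi₀', hg, mul_add, Finset.mul_sum]
    congr 1
    · ring
    refine Finset.sum_congr rfl fun i hi => ?_
    have hmem := Finset.mem_of_mem_erase hi
    have hne := Finset.ne_of_mem_erase hi
    have hlt : e i < e i₀ := (Finset.mem_filter.1 hmem).2.resolve_left hne
    rw [← mul_assoc, mul_comm (T ^ e i₀) (b i), mul_assoc]
    congr 1
    rw [inv_pow, ← pow_sub₀ T hT (by omega)]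
    congr 1
    omega
  have hgt : Tendsto g atTop (𝓝 (b i₀)) := by
    have : Tendsto (fun T : ℝ => ∑ i ∈ s'.erase i₀, b i * T⁻¹ ^ (e i₀ - e i)) atTop (𝓝 0) := by
      have hterm : ∀ i ∈ s'.erase i₀,
          Tendsto (fun T : ℝ => b i * T⁻¹ ^ (e i₀ - e i)) atTop (𝓝 0) := by
        intro i hi
        have hlt : e i < e i₀ :=
          (Finset.mem_filter.1 (Finset.mem_of_mem_erase hi)).2.resolve_left
            (Finset.ne_of_mem_erase hi)
        have : Tendsto (fun T : ℝ => T⁻¹ ^ (e i₀ - e i)) atTop (𝓝 0) := by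
          have h0 : Tendsto (fun T : ℝ => T⁻¹) atTop (𝓝 0) := tendsto_inv_atTop_zero
          have := h0.pow (e i₀ - e i)
          simpa [zero_pow (show e i₀ - e i ≠ 0 by omega)] using this
        simpa using this.const_mul (b i)
      have := tendsto_finset_sum _ hterm
      simpa using this
    have := this.const_add (b i₀)
    simpa [hg] using this
  have hev : ∀ᶠ T in atTop, 0 < g T := hgt.eventually (eventually_gt_nhds hb)
  filter_upwards [hev, eventually_gt_atTop (0:ℝ)] with T hgT hTpos
  rw [hsum, hfac T (ne_of_gt hTpos)]
  exact mul_pos (pow_pos hTpos _) hgT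

lemma det_updateColumn_sum' {p : ℕ} {ι : Type*} [DecidableEq ι] (B : Matrix (Fin p) (Fin p) ℝ)
    (col : Fin p) (s : Finset ι) (f : ι → Fin p → ℝ) :
    (B.updateCol col (fun x => ∑ j ∈ s, f j x)).det
      = ∑ j ∈ s, (B.updateCol col (f j)).det := by
  classical
  induction s using Finset.induction with
  | empty =>
    simp only [Finset.sum_empty]
    exact Matrix.det_eq_zero_of_column_eq_zero col (fun i => by simp [Matrix.updateCol_apply])
  | @insert a s ha ih =>
    have h1 : (fun x => ∑ j ∈ insert a s, f j x) = (f a + fun x => ∑ j ∈ s, f j x) := by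
      funext x
      rw [Finset.sum_insert ha]
      rfl
    rw [h1, Matrix.det_updateCol_add, ih, Finset.sum_insert ha]

lemma strictMono_fin_id {p : ℕ} (f : Fin p → Fin p) (hf : StrictMono f) : ∀ x, f x = x := by
  have hsurj : Function.Surjective f :=
    Finite.surjective_of_injective hf.injective
  have hrange : Set.range f = Set.range (id : Fin p → Fin p) := by
    rw [Set.range_eq_univ.2 hsurj, Set.range_id]
  haveI : WellFoundedLT (Fin p) := inferInstance
  have hid : f = id :=
    (StrictMono.range_inj (β := Fin p) (γ := Fin p) hf
      (strictMono_id : StrictMono (id : Fin p → Fin p))).1 hrange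
  intro x; exact congrFun hid x




/-- `A` is strictly sign regular of order `p` with sign pattern `ε` (`SSR_p(ε)`):
for every `k ∈ {1, …, p}` (here `k = kk.val + 1` for `kk : Fin p`), every `k × k` minor of `A`
(the determinant of the submatrix on any `k` rows and `k` columns taken in increasing order)
has sign `ε k`, i.e. `ε k` times the minor is strictly positive. -/
def IsSSRp (p : ℕ) {m n : ℕ} (A : Matrix (Fin m) (Fin n) ℝ) (ε : Fin p → ℝ) : Prop :=
  ∀ (kk : Fin p) (r : Fin (kk.val + 1) → Fin m) (c : Fin (kk.val + 1) → Fin n),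
    StrictMono r → StrictMono c → 0 < ε kk * (A.submatrix r c).det

lemma lemmaA (m n : ℕ) (hn : 1 ≤ n) (ε : Fin n → ℝ) (η : ℝ) (hη : η = 1 ∨ η = -1)
    (A : Matrix (Fin m) (Fin n) ℝ) (hA : IsSSRp n A ε)
    (r : Fin (n+1) → Fin m) (hr : StrictMono r) :
    ∀ᶠ T in Filter.atTop, 0 < η * (-1)^n *
      (Matrix.of fun i (j : Fin (n+1)) => Fin.snoc (fun j' : Fin n => A (r i) j')
        (η * (-1)^n * ε ⟨n-1, by omega⟩ * T ^ ((r i : ℕ))) j).det := by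
  have hη2 : η * η = 1 := by rcases hη with rfl | rfl <;> norm_num
  set εl : ℝ := ε ⟨n-1, by omega⟩ with hεl
  -- the minors
  have hDpos : ∀ i : Fin (n+1),
      0 < εl * (Matrix.of fun (i' j' : Fin n) => A (r (i.succAbove i')) j').det := by
    intro i
    have hc : n - 1 + 1 = n := by omega
    have hr' : StrictMono (fun a : Fin (n-1+1) => r (i.succAbove (Fin.cast hc a))) := by
      intro x y hxy
      exact hr (Fin.strictMono_succAbove i (by simpa using hxy))
    have hc' : StrictMono (fun a : Fin (n-1+1) => (Fin.cast hc a : Fin n)) := by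
      intro x y hxy; simpa using hxy
    have := hA ⟨n-1, by omega⟩ _ _ hr' hc'
    have heq : (A.submatrix (fun a : Fin (n-1+1) => r (i.succAbove (Fin.cast hc a)))
        (fun a : Fin (n-1+1) => (Fin.cast hc a : Fin n))) =
        (Matrix.of fun (i' j' : Fin n) => A (r (i.succAbove i')) j').submatrix
          (Fin.cast hc) (Fin.cast hc) := by
      ext i' j'
      simp [Matrix.submatrix_apply]
    rw [heq] at this
    have hdet : ((Matrix.of fun (i' j' : Fin n) => A (r (i.succAbove i')) j').submatrix
          (Fin.cast hc) (Fin.cast hc)).det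
        = (Matrix.of fun (i' j' : Fin n) => A (r (i.succAbove i')) j').det := by
      have := Matrix.det_submatrix_equiv_self (finCongr hc)
        (Matrix.of fun (i' j' : Fin n) => A (r (i.succAbove i')) j')
      simpa [finCongr] using this
    rw [hdet] at this
    exact this
  have hb : True := trivial
  have hsum : ∀ T : ℝ, η * (-1)^n *
      (Matrix.of fun i (j : Fin (n+1)) => Fin.snoc (fun j' : Fin n => A (r i) j')
        (η * (-1)^n * εl * T ^ ((r i : ℕ))) j).det
      = ∑ i : Fin (n+1), ((-1 : ℝ)^((i : ℕ) + n)
          * (εl * (Matrix.of fun (i' j' : Fin n) => A (r (i.succAbove i')) j').det))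
          * T ^ ((r i : ℕ)) := by
    intro T
    rw [Matrix.det_succ_column _ (Fin.last n)]
    rw [Finset.mul_sum]
    refine Finset.sum_congr rfl fun i _ => ?_
    have h1 : (Matrix.of fun i (j : Fin (n+1)) => Fin.snoc (fun j' : Fin n => A (r i) j')
        (η * (-1)^n * εl * T ^ ((r i : ℕ))) j) i (Fin.last n)
        = η * (-1)^n * εl * T ^ ((r i : ℕ)) := by
      simp [Fin.snoc_last]
    have h2 : ((Matrix.of fun i (j : Fin (n+1)) => Fin.snoc (fun j' : Fin n => A (r i) j')
        (η * (-1)^n * εl * T ^ ((r i : ℕ))) j).submatrix i.succAbove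
          (Fin.last n).succAbove) = Matrix.of fun (i' j' : Fin n) => A (r (i.succAbove i')) j' := by
      ext i' j'
      simp [Matrix.submatrix_apply, Fin.succAbove_last, Fin.snoc_castSucc]
    rw [h1, h2]
    have hval : ((Fin.last n : Fin (n+1)) : ℕ) = n := rfl
    rw [hval]
    have hnn : ((-1:ℝ))^n * (-1)^n = 1 := by
      rw [← pow_add]
      exact Even.neg_one_pow ⟨n, by ring⟩
    have key : η * ((-1:ℝ))^n * (η * (-1)^n * εl) = εl := by
      have h' : η * ((-1:ℝ))^n * (η * (-1)^n * εl) = (η*η) * (((-1:ℝ))^n*(-1)^n) * εl := by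
        ring
      rw [h', hη2, hnn]
      ring
    linear_combination ((-1:ℝ))^((i:ℕ)+n) * T ^ ((r i : ℕ))
      * (Matrix.of fun (i' j' : Fin n) => A (r (i.succAbove i')) j').det * key
  -- now apply helper_top
  have hht := helper_top (Finset.univ : Finset (Fin (n+1)))
      (fun i => (-1 : ℝ)^((i : ℕ) + n)
          * (εl * (Matrix.of fun (i' j' : Fin n) => A (r (i.succAbove i')) j').det))
      (fun i => ((r i : ℕ))) (Fin.last n) (Finset.mem_univ _) ?_ ?_
  · refine hht.mono fun T hT => ?_
    rw [hsum T]
    exact hT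
  · have h1 : ((Fin.last n : Fin (n+1)) : ℕ) + n = n + n := by simp
    rw [h1, Even.neg_one_pow ⟨n, by ring⟩, one_mul]
    exact hDpos _
  · intro i _ hne
    right
    have hi : i < Fin.last n := lt_of_le_of_ne (Fin.le_last i) hne
    exact hr hi





lemma caseB (m n : ℕ) (hn : 1 ≤ n) (ε : Fin n → ℝ) (A : Matrix (Fin m) (Fin n) ℝ)
    (hA : IsSSRp n A ε) (η : ℝ)
    (W : Fin m → ℝ)
    (hW : ∀ r : Fin (n+1) → Fin m, StrictMono r →
      0 < η * (-1)^n * (Matrix.of fun i (j : Fin (n+1)) =>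
        Fin.snoc (fun j' : Fin n => A (r i) j') (W (r i)) j).det)
    (v : ℕ → Fin m → ℝ)
    (hv : ∀ j (h : j < n), v j = fun x => A x ⟨n-1-j, by omega⟩)
    (hvn : v n = W)
    (q : ℕ) (hqn : q ≤ n) (r : Fin (q+1) → Fin m) (hr : StrictMono r)
    (S : Fin q → Fin n) (hS : StrictMono S) (εv : ℝ)
    (hεn : q = n → εv = η) (hεq : ∀ h : q < n, εv = ε ⟨q, h⟩) :
    ∀ᶠ t in 𝓝[>] (0:ℝ), 0 < εv * (Matrix.of fun i (j : Fin (q+1)) =>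
      Fin.snoc (fun j' : Fin q => A (r i) (S j'))
        (∑ j ∈ Finset.range (n+1), (-1:ℝ)^j * t^j * v j (r i)) j).det := by
  classical
  set B₀ : Matrix (Fin (q+1)) (Fin (q+1)) ℝ := Matrix.of fun (i : Fin (q+1)) (j : Fin (q+1)) =>
    (Fin.snoc (fun j' : Fin q => A (r i) (S j')) (0:ℝ) : Fin (q+1) → ℝ) j with hB₀
  set E : ℕ → ℝ := fun j => (B₀.updateCol (Fin.last q) (fun i => v j (r i))).det with hE
  -- the matrix as an updateColumn of B₀
  have hmat : ∀ t : ℝ, (Matrix.of fun i (j : Fin (q+1)) =>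
      Fin.snoc (fun j' : Fin q => A (r i) (S j'))
        (∑ j ∈ Finset.range (n+1), (-1:ℝ)^j * t^j * v j (r i)) j)
      = B₀.updateCol (Fin.last q)
          (fun i => ∑ j ∈ Finset.range (n+1), (-1:ℝ)^j * t^j * v j (r i)) := by
    intro t
    ext i j
    refine Fin.lastCases ?_ ?_ j
    · rw [Matrix.updateCol_self]
      simp [Fin.snoc_last]
    · intro j'
      rw [Matrix.updateCol_ne (Fin.castSucc_lt_last j').ne]
      simp [hB₀, Fin.snoc_castSucc]
  -- determinant expansion in powers of t
  have hsum : ∀ t : ℝ, εv * (Matrix.of fun i (j : Fin (q+1)) =>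
      Fin.snoc (fun j' : Fin q => A (r i) (S j'))
        (∑ j ∈ Finset.range (n+1), (-1:ℝ)^j * t^j * v j (r i)) j).det
      = ∑ j ∈ Finset.range (n+1), (εv * (-1:ℝ)^j * E j) * t^j := by
    intro t
    rw [hmat t]
    rw [det_updateColumn_sum' B₀ (Fin.last q) (Finset.range (n+1))
      (fun j => fun i => (-1:ℝ)^j * t^j * v j (r i))]
    rw [Finset.mul_sum]
    refine Finset.sum_congr rfl fun j _ => ?_
    have hsm : (fun i => (-1:ℝ)^j * t^j * v j (r i))
        = ((-1:ℝ)^j * t^j) • (fun i => v j (r i)) := by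
      funext i
      simp [smul_eq_mul]
    rw [hsm, Matrix.det_updateCol_smul, hE]
    ring
  -- zero lemma
  have hzero : ∀ jn : ℕ, (h : jn < n) → (∃ j₀ : Fin q, S j₀ = ⟨n-1-jn, by omega⟩) → E jn = 0 := by
    intro jn hjn ⟨j₀, hj₀⟩
    rw [hE]
    simp only
    refine Matrix.det_zero_of_column_eq (Fin.castSucc_lt_last j₀).ne ?_
    intro k
    rw [Matrix.updateCol_ne (Fin.castSucc_lt_last j₀).ne, Matrix.updateCol_self]
    rw [hv jn hjn]
    simp [hB₀, Fin.snoc_castSucc, hj₀]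
  rcases eq_or_lt_of_le hqn with hq | hq
  · -- q = n
    subst hq
    have hεv : εv = η := hεn rfl
    have hSid : ∀ x, S x = x := strictMono_fin_id S hS
    have happ := helper_small (Finset.range (q+1)) (fun j => εv * (-1:ℝ)^j * E j)
      (fun j => j) q (Finset.self_mem_range_succ q) ?_ ?_
    · refine happ.mono fun t ht => ?_
      rw [hsum t]
      simpa using ht
    · -- 0 < b q
      have hmm : B₀.updateCol (Fin.last q) (fun i => v q (r i))
          = (Matrix.of fun i (j : Fin (q+1)) =>
          Fin.snoc (fun j' : Fin q => A (r i) j') (W (r i)) j) := by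
        ext i j
        refine Fin.lastCases ?_ ?_ j
        · rw [Matrix.updateCol_self]
          simp [hvn, Fin.snoc_last]
        · intro j'
          rw [Matrix.updateCol_ne (Fin.castSucc_lt_last j').ne]
          simp [hB₀, Fin.snoc_castSucc, hSid]
      have hEq : E q = (Matrix.of fun i (j : Fin (q+1)) =>
          Fin.snoc (fun j' : Fin q => A (r i) j') (W (r i)) j).det := by
        rw [hE]
        simp only
        rw [hmm]
      rw [hEq, hεv]
      exact hW r hr
    · intro j hj hne
      left
      have hjq : j < q := by
        have := Finset.mem_range.1 hj
        omega
      have hz : E j = 0 := by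
        refine hzero j hjq ⟨⟨q-1-j, by omega⟩, ?_⟩
        exact hSid _
      rw [hz, mul_zero]
  · -- q < n
    set Sset : Finset (Fin n) := Finset.image S Finset.univ with hSset
    have hcard : Sset.card = q := by
      rw [hSset, Finset.card_image_of_injective _ hS.injective, Finset.card_univ,
        Fintype.card_fin]
    have hcompl : (Finset.univ \ Sset).Nonempty := by
      rw [← Finset.card_pos, Finset.card_sdiff_of_subset (Finset.subset_univ _), Finset.card_univ,
        Fintype.card_fin, hcard]
      omega
    set pstar : Fin n := (Finset.univ \ Sset).max' hcompl with hpstar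
    have hpnotin : pstar ∉ Sset := by
      have := Finset.max'_mem _ hcompl
      rw [Finset.mem_sdiff] at this
      exact this.2
    have hclaim1 : ∀ x : Fin n, pstar < x → x ∈ Sset := by
      intro x hx
      by_contra hxn
      have hmem : x ∈ Finset.univ \ Sset := Finset.mem_sdiff.2 ⟨Finset.mem_univ _, hxn⟩
      exact absurd (Finset.le_max' _ _ hmem) (not_le.2 hx)
    set jstar : ℕ := n - 1 - (pstar : ℕ) with hjstar
    have hpval : (pstar : ℕ) ≤ n - 1 := by
      have := pstar.isLt
      omega
    have hIoi : Finset.Ioi pstar ⊆ Sset := fun x hx => hclaim1 x (Finset.mem_Ioi.1 hx)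
    have hjq : jstar ≤ q := by
      have hcc := Finset.card_le_card hIoi
      rw [Fin.card_Ioi, hcard] at hcc
      omega
    set ell : ℕ := q - jstar with hell
    set V : Finset (Fin q) := Finset.univ.filter (fun j => pstar < S j) with hV
    have himg : Finset.image S V = Finset.Ioi pstar := by
      apply Finset.Subset.antisymm
      · intro x hx
        obtain ⟨j, hj, rfl⟩ := Finset.mem_image.1 hx
        exact Finset.mem_Ioi.2 (Finset.mem_filter.1 hj).2
      · intro x hx
        have hxS : x ∈ Sset := hIoi hx
        obtain ⟨j, _, rfl⟩ := Finset.mem_image.1 hxS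
        exact Finset.mem_image.2
          ⟨j, Finset.mem_filter.2 ⟨Finset.mem_univ _, Finset.mem_Ioi.1 hx⟩, rfl⟩
    have hVcard : V.card = jstar := by
      have hcc := congrArg Finset.card himg
      rw [Finset.card_image_of_injective _ hS.injective, Fin.card_Ioi] at hcc
      omega
    have hSne : ∀ j : Fin q, S j ≠ pstar := by
      intro j hj
      exact hpnotin (hj ▸ Finset.mem_image.2 ⟨j, Finset.mem_univ _, rfl⟩)
    have hF3 : ∀ j : Fin q, pstar < S j ↔ ell ≤ (j:ℕ) := by
      intro j
      constructor
      · intro hj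
        by_contra hcon
        have hsub : Finset.Ici j ⊆ V := by
          intro j' hj'
          have hle : j ≤ j' := Finset.mem_Ici.1 hj'
          rcases eq_or_lt_of_le hle with rfl | hlt
          · exact Finset.mem_filter.2 ⟨Finset.mem_univ _, hj⟩
          · exact Finset.mem_filter.2 ⟨Finset.mem_univ _, lt_trans hj (hS hlt)⟩
        have hcc := Finset.card_le_card hsub
        rw [Fin.card_Ici, hVcard] at hcc
        have hjlt := j.isLt
        omega
      · intro hj
        by_contra hcon
        have hlt : S j < pstar := lt_of_le_of_ne (not_lt.1 hcon) (hSne j)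
        have hsub : V ⊆ Finset.Ioi j := by
          intro j' hj'
          have hj'2 : pstar < S j' := (Finset.mem_filter.1 hj').2
          rw [Finset.mem_Ioi]
          by_contra hcon2
          have hle : S j' ≤ S j := hS.le_iff_le.2 (not_lt.1 hcon2)
          exact absurd hj'2 (not_lt.2 (le_trans hle (le_of_lt hlt)))
        have hcc := Finset.card_le_card hsub
        rw [Fin.card_Ioi, hVcard] at hcc
        have hjlt := j.isLt
        omega
    have hjn : jstar < n := by omega
    -- the inserted column map
    have hellq : ell ≤ q := by omega
    set Splus : Fin (q+1) → Fin n := fun j =>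
      if h : (j:ℕ) < ell then S ⟨(j:ℕ), by omega⟩
      else if h2 : (j:ℕ) = ell then pstar
      else S ⟨(j:ℕ) - 1, by
        have := j.isLt
        omega⟩ with hSplusdef
    have hSplus_lt : ∀ (j : Fin (q+1)) (h : (j:ℕ) < ell), Splus j = S ⟨(j:ℕ), by omega⟩ := by
      intro j h
      rw [hSplusdef]
      simp only [dif_pos h]
    have hSplus_eq : ∀ (j : Fin (q+1)) (h : (j:ℕ) = ell), Splus j = pstar := by
      intro j h
      rw [hSplusdef]
      simp only
      rw [dif_neg (by omega), dif_pos h]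
    have hSplus_gt : ∀ (j : Fin (q+1)) (h : ell < (j:ℕ)), Splus j
        = S ⟨(j:ℕ) - 1, by have := j.isLt; omega⟩ := by
      intro j h
      rw [hSplusdef]
      simp only
      rw [dif_neg (by omega), dif_neg (by omega)]
    have hSplusMono : StrictMono Splus := by
      rw [Fin.strictMono_iff_lt_succ]
      intro i
      have hiv : ((Fin.castSucc i : Fin (q+1)) : ℕ) = (i : ℕ) := rfl
      have hiv2 : ((Fin.succ i : Fin (q+1)) : ℕ) = (i : ℕ) + 1 := rfl
      have hilt := i.isLt
      rcases lt_trichotomy ((i:ℕ)+1) ell with h1 | h1 | h1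
      · rw [hSplus_lt _ (by omega), hSplus_lt _ (by rw [hiv2]; omega)]
        exact hS (by simp [Fin.lt_def])
      · rw [hSplus_lt _ (by omega), hSplus_eq _ (by rw [hiv2]; omega)]
        have hnotlt : ¬ pstar < S ⟨(i:ℕ), by omega⟩ := by
          rw [hF3]
          simp only
          omega
        exact lt_of_le_of_ne (not_lt.1 hnotlt) (hSne _)
      · rcases lt_trichotomy ((i:ℕ)) ell with h2 | h2 | h2
        · omega
        · rw [hSplus_eq _ (by rw [hiv]; omega), hSplus_gt _ (by rw [hiv2]; omega)]
          have : pstar < S ⟨(i:ℕ)+1-1, by omega⟩ := by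
            rw [hF3]
            simp only
            omega
          convert this using 2
          all_goals rfl
        · rw [hSplus_gt _ (by rw [hiv]; omega), hSplus_gt _ (by rw [hiv2]; omega)]
          refine hS ?_
          rw [Fin.lt_def]
          simp only
          omega
    set lhat : Fin (q+1) := ⟨ell, by omega⟩ with hlhat
    have hF6 : Splus lhat = pstar := hSplus_eq _ rfl
    have hF5 : ∀ j' : Fin q, Splus (lhat.succAbove j') = S j' := by
      intro j'
      rcases lt_or_ge ((j':ℕ)) ell with h | h
      · have hsa : lhat.succAbove j' = Fin.castSucc j' := by
          apply Fin.succAbove_of_castSucc_lt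
          exact h
        rw [hsa, hSplus_lt _ h]
        exact congrArg S (Fin.ext (by simp))
      · have hsa : lhat.succAbove j' = Fin.succ j' := by
          apply Fin.succAbove_of_le_castSucc
          exact h
        rw [hsa, hSplus_gt _ (by rw [Fin.val_succ]; omega)]
        exact congrArg S (Fin.ext (by simp))
    have hminor : ∀ i : Fin (q+1),
        ((B₀.updateCol (Fin.last q) (fun i => v jstar (r i))).submatrix
          i.succAbove (Fin.last q).succAbove)
        = Matrix.of (fun (i' j' : Fin q) => A (r (i.succAbove i')) (S j')) := by
      intro i
      ext i' j'
      rw [Matrix.submatrix_apply, Fin.succAbove_last]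
      rw [Matrix.updateCol_ne (Fin.castSucc_lt_last j').ne]
      simp [hB₀, Fin.snoc_castSucc]
    have hminor' : ∀ i : Fin (q+1),
        ((A.submatrix r Splus).submatrix i.succAbove lhat.succAbove)
        = Matrix.of (fun (i' j' : Fin q) => A (r (i.succAbove i')) (S j')) := by
      intro i
      ext i' j'
      rw [Matrix.submatrix_apply, Matrix.submatrix_apply, hF5]
      simp
    have hXdet : E jstar = (-1:ℝ)^jstar * (A.submatrix r Splus).det := by
      rw [hE]
      simp only
      rw [Matrix.det_succ_column _ (Fin.last q)]
      rw [Matrix.det_succ_column (A.submatrix r Splus) lhat]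
      rw [Finset.mul_sum]
      refine Finset.sum_congr rfl fun i _ => ?_
      rw [hminor i, hminor' i]
      have h1 : (B₀.updateCol (Fin.last q) (fun i => v jstar (r i))) i (Fin.last q)
          = A (r i) pstar := by
        rw [Matrix.updateCol_self, hv jstar hjn]
        show A (r i) ⟨n - 1 - jstar, by omega⟩ = A (r i) pstar
        congr 1
        apply Fin.ext
        show n - 1 - jstar = (pstar : ℕ)
        omega
      have h2 : (A.submatrix r Splus) i lhat = A (r i) pstar := by
        rw [Matrix.submatrix_apply, hF6]
      rw [h1, h2]
      have hlv : ((Fin.last q : Fin (q+1)) : ℕ) = q := rfl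
      have hlv2 : ((lhat : Fin (q+1)) : ℕ) = ell := rfl
      rw [hlv, hlv2]
      have hexp : (i:ℕ) + q = jstar + ((i:ℕ) + ell) := by omega
      rw [hexp, pow_add]
      ring
    have hbpos : 0 < εv * (-1:ℝ)^jstar * E jstar := by
      rw [hXdet]
      have hnn : ((-1:ℝ))^jstar * (-1)^jstar = 1 := by
        rw [← pow_add]
        exact Even.neg_one_pow ⟨jstar, by ring⟩
      have hεv : εv = ε ⟨q, hq⟩ := hεq hq
      have hApos := hA ⟨q, hq⟩ r Splus hr hSplusMono
      have hd : εv * (-1:ℝ)^jstar * ((-1:ℝ)^jstar * (A.submatrix r Splus).det)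
          = εv * (A.submatrix r Splus).det := by
        have hre : εv * (-1:ℝ)^jstar * ((-1:ℝ)^jstar * (A.submatrix r Splus).det)
            = ((-1:ℝ)^jstar * (-1:ℝ)^jstar) * (εv * (A.submatrix r Splus).det) := by
          ring
        rw [hre, hnn, one_mul]
      rw [hd, hεv]
      exact hApos
    have hbz : ∀ j : ℕ, j < jstar → E j = 0 := by
      intro j hj
      refine hzero j (by omega) ?_
      have hgt : pstar < (⟨n-1-j, by omega⟩ : Fin n) := by
        rw [Fin.lt_def]
        simp only
        omega
      have hmem : (⟨n-1-j, by omega⟩ : Fin n) ∈ Sset := hclaim1 _ hgt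
      obtain ⟨j₀, _, hj₀⟩ := Finset.mem_image.1 hmem
      exact ⟨j₀, hj₀⟩
    have happ := helper_small (Finset.range (n+1)) (fun j => εv * (-1:ℝ)^j * E j)
      (fun j => j) jstar (Finset.mem_range.2 (by omega)) ?_ ?_
    · refine happ.mono fun t ht => ?_
      rw [hsum t]
      simpa using ht
    · exact hbpos
    · intro j hj hne
      rcases lt_or_gt_of_ne hne with hlt | hgt
      · left
        rw [hbz j hlt, mul_zero]
      · right
        exact hgt

theorem stmt_9 (m n : ℕ) (hn : 1 ≤ n) (hnm : n < m) (ε : Fin n → ℝ)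
    (hε : ∀ i, ε i = 1 ∨ ε i = -1) (η : ℝ) (hη : η = 1 ∨ η = -1)
    (A : Matrix (Fin m) (Fin n) ℝ) (hA : IsSSRp n A ε) :
    ∃ c : Fin m → ℝ,
      IsSSRp (n + 1) ((Matrix.of fun i => Fin.snoc (A i) (c i)) : Matrix (Fin m) (Fin (n + 1)) ℝ)
        (Fin.snoc ε η) := by
  classical
  -- Step 1: a last-column vector W making all top-size (n+1)-minors have sign η·(-1)^n
  have hex : ∃ W : Fin m → ℝ, ∀ r : Fin (n+1) → Fin m, StrictMono r →
      0 < η * (-1)^n * (Matrix.of fun i (j : Fin (n+1)) =>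
        Fin.snoc (fun j' : Fin n => A (r i) j') (W (r i)) j).det := by
    have hLA : ∀ᶠ T in Filter.atTop, ∀ r : Fin (n+1) → Fin m, StrictMono r →
        0 < η * (-1)^n * (Matrix.of fun i (j : Fin (n+1)) =>
          Fin.snoc (fun j' : Fin n => A (r i) j')
            (η * (-1)^n * ε ⟨n-1, by omega⟩ * T ^ ((r i : ℕ))) j).det := by
      rw [Filter.eventually_all]
      intro r
      by_cases hr : StrictMono r
      · exact (lemmaA m n hn ε η hη A hA r hr).mono (fun T h _ => h)
      · exact Filter.Eventually.of_forall fun T hr' => absurd hr' hr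
    obtain ⟨T, hT⟩ := hLA.exists
    exact ⟨fun x => η * (-1)^n * ε ⟨n-1, by omega⟩ * T ^ ((x:ℕ)), fun r hr => hT r hr⟩
  obtain ⟨W, hW⟩ := hex
  -- Step 2: the columns used in the construction
  set v : ℕ → Fin m → ℝ := fun j => if h : j < n then (fun x => A x ⟨n-1-j, by omega⟩) else W
    with hvdef
  have hv : ∀ j (h : j < n), v j = fun x => A x ⟨n-1-j, by omega⟩ := by
    intro j h
    rw [hvdef]
    simp only [dif_pos h]
  have hvn : v n = W := by
    rw [hvdef]
    simp only [dif_neg (lt_irrefl n)]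
  -- Step 3: it suffices to find one good small t
  suffices hev : ∀ᶠ t in nhdsWithin (0:ℝ) (Set.Ioi 0), IsSSRp (n + 1)
      ((Matrix.of fun i => Fin.snoc (A i)
        (∑ j ∈ Finset.range (n+1), (-1:ℝ)^j * t^j * v j i)) : Matrix (Fin m) (Fin (n + 1)) ℝ)
      (Fin.snoc ε η) by
    obtain ⟨t, ht⟩ := hev.exists
    exact ⟨fun i => ∑ j ∈ Finset.range (n+1), (-1:ℝ)^j * t^j * v j i, ht⟩
  unfold IsSSRp
  refine Filter.eventually_all.2 fun kk => Filter.eventually_all.2 fun r =>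
    Filter.eventually_all.2 fun κ => ?_
  by_cases hr : StrictMono r
  swap
  · exact Filter.Eventually.of_forall fun t hr' _ => absurd hr' hr
  by_cases hκ : StrictMono κ
  swap
  · exact Filter.Eventually.of_forall fun t _ hκ' => absurd hκ' hκ
  suffices hcore : ∀ᶠ t in nhdsWithin (0:ℝ) (Set.Ioi 0),
      0 < (Fin.snoc ε η : Fin (n+1) → ℝ) kk * ((Matrix.of fun i => Fin.snoc (A i)
        (∑ j ∈ Finset.range (n+1), (-1:ℝ)^j * t^j * v j i)).submatrix r κ).det by
    exact hcore.mono fun t h _ _ => h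
  by_cases hlast : ∃ j, κ j = Fin.last n
  · -- the new column is involved
    obtain ⟨j₁, hj₁⟩ := hlast
    have hklast : κ (Fin.last kk.val) = Fin.last n := by
      apply le_antisymm (Fin.le_last _)
      rw [← hj₁]
      exact hκ.monotone (Fin.le_last j₁)
    have hqn : kk.val ≤ n := by
      have := kk.isLt
      omega
    have hcs : ∀ j' : Fin kk.val, (κ (Fin.castSucc j') : ℕ) < n := by
      intro j'
      have h1 : κ (Fin.castSucc j') < κ (Fin.last kk.val) := hκ (Fin.castSucc_lt_last j')
      rw [hklast] at h1
      simpa [Fin.lt_def] using h1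
    set S : Fin kk.val → Fin n := fun j' => ⟨(κ (Fin.castSucc j') : ℕ), hcs j'⟩ with hSdef
    have hSm : StrictMono S := by
      intro a b hab
      have h1 : Fin.castSucc a < Fin.castSucc b := by rwa [Fin.castSucc_lt_castSucc_iff]
      have := hκ h1
      rw [Fin.lt_def] at this
      rwa [Fin.lt_def]
    have hsubm : ∀ t : ℝ, ((Matrix.of fun i => Fin.snoc (A i)
        (∑ j ∈ Finset.range (n+1), (-1:ℝ)^j * t^j * v j i)).submatrix r κ)
        = Matrix.of fun (i : Fin (kk.val+1)) (j : Fin (kk.val+1)) =>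
            (Fin.snoc (fun j' : Fin kk.val => A (r i) (S j'))
              (∑ j ∈ Finset.range (n+1), (-1:ℝ)^j * t^j * v j (r i)) : Fin (kk.val+1) → ℝ) j := by
      intro t
      ext i j
      refine Fin.lastCases ?_ ?_ j
      · rw [Matrix.submatrix_apply, Matrix.of_apply, hklast]
        simp [Fin.snoc_last]
      · intro j'
        rw [Matrix.submatrix_apply, Matrix.of_apply]
        have hc : κ (Fin.castSucc j') = Fin.castSucc (S j') := Fin.ext rfl
        rw [hc, Fin.snoc_castSucc]
        simp [Fin.snoc_castSucc]
    have hεn : kk.val = n → (Fin.snoc ε η : Fin (n+1) → ℝ) kk = η := by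
      intro hkn
      have hkl : kk = Fin.last n := Fin.ext (by simpa using hkn)
      rw [hkl, Fin.snoc_last]
    have hεq : ∀ h : kk.val < n, (Fin.snoc ε η : Fin (n+1) → ℝ) kk = ε ⟨kk.val, h⟩ := by
      intro h
      have hkl : kk = Fin.castSucc ⟨kk.val, h⟩ := Fin.ext rfl
      have h2 : (Fin.snoc ε η : Fin (n+1) → ℝ) (Fin.castSucc ⟨kk.val, h⟩) = ε ⟨kk.val, h⟩ :=
        Fin.snoc_castSucc _ _ _
      rw [← h2]
      exact congrArg _ hkl
    have hcb := caseB m n hn ε A hA η W hW v hv hvn kk.val hqn r hr S hSm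
      ((Fin.snoc ε η : Fin (n+1) → ℝ) kk) hεn hεq
    refine hcb.mono fun t ht => ?_
    rw [hsubm t]
    exact ht
  · -- the new column is not involved: a minor of A itself
    push_neg at hlast
    have hlt : ∀ j, (κ j : ℕ) < n := by
      intro j
      have h1 := (κ j).isLt
      have h2 : (κ j : ℕ) ≠ n := fun hcon => hlast j (Fin.ext (by simpa using hcon))
      omega
    set κ' : Fin (kk.val+1) → Fin n := fun j => ⟨(κ j : ℕ), hlt j⟩ with hκ'def
    have hκ'm : StrictMono κ' := by
      intro a b hab
      have := hκ hab
      rw [Fin.lt_def] at this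
      rwa [Fin.lt_def]
    have hkkn : kk.val < n := by
      have h := Fintype.card_le_of_injective κ' hκ'm.injective
      simpa using h
    have hsubm : ∀ t : ℝ, ((Matrix.of fun i => Fin.snoc (A i)
        (∑ j ∈ Finset.range (n+1), (-1:ℝ)^j * t^j * v j i)).submatrix r κ)
        = A.submatrix r κ' := by
      intro t
      ext i j
      rw [Matrix.submatrix_apply, Matrix.submatrix_apply, Matrix.of_apply]
      have hc : κ j = Fin.castSucc (κ' j) := Fin.ext rfl
      rw [hc, Fin.snoc_castSucc]
    have hεkk : (Fin.snoc ε η : Fin (n+1) → ℝ) kk = ε ⟨kk.val, hkkn⟩ := by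
      have hkl : kk = Fin.castSucc ⟨kk.val, hkkn⟩ := Fin.ext rfl
      have h2 : (Fin.snoc ε η : Fin (n+1) → ℝ) (Fin.castSucc ⟨kk.val, hkkn⟩) = ε ⟨kk.val, hkkn⟩ :=
        Fin.snoc_castSucc _ _ _
      rw [← h2]
      exact congrArg _ hkl
    refine Filter.Eventually.of_forall fun t => ?_
    rw [hsubm t, hεkk]
    exact hA ⟨kk.val, hkkn⟩ r κ' hr hκ'm
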